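/- Let c=(c_0,c_1,c_2,...) be a sequence of rationals and set c_{-1}=0. Define α_n = c_{2n-1}+c_{2n} and β_n = c_{2n}·c_{2n+1} for all n≥0. Then for every n≥0, Dyck_n(c) = Mot_n(α,β). -/

import Mathlib

/-- A step of a Motzkin path: up `(1,1)`, down `(1,-1)`, or horizontal `(1,0)`. -/
inductive MStep : Type
  | up : MStep
  | down : MStep
  | flat : MStep
  deriving DecidableEq

instance : Fintype MStep where
  elems := {MStep.up, MStep.down, MStep.flat}
  complete := by intro x; cases x <;> simp

/-- The vertical displacement of a Motzkin step. -/
def MStep.val : MStep → ℤ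
  | .up => 1
  | .down => -1
  | .flat => 0

/-- The height of the path after its first `k` steps. -/
def mHeight (l : List MStep) (k : ℕ) : ℤ := ((l.take k).map MStep.val).sum

/-- A list of steps is a Motzkin path if it never goes below the x-axis and ends at height 0. -/
def IsMotzkin (l : List MStep) : Prop :=
  (∀ k : ℕ, 0 ≤ mHeight l k) ∧ mHeight l l.length = 0

/-- The weight of a Motzkin path w.r.t. `(b, lam)`: a factor `b i` for every horizontal step
of height `i` and a factor `lam i` for every down step of height `i` (the height of a step
being the `y`-coordinate of its ending point). -/
def mWeight (b lam : ℕ → ℚ) (l : List MStep) : ℚ :=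
  ∏ i ∈ Finset.range l.length,
    match l.getD i MStep.up with
    | .up => 1
    | .flat => b (mHeight l (i + 1)).toNat
    | .down => lam (mHeight l (i + 1)).toNat

open Classical in
/-- `Mot_n(b,lam)`: the sum of the weights of all Motzkin paths of length `n`. -/
noncomputable def motSum (n : ℕ) (b lam : ℕ → ℚ) : ℚ :=
  ∑ f : Fin n → MStep,
    if IsMotzkin (List.ofFn f) then mWeight b lam (List.ofFn f) else 0

/-- A step of a Dyck path: up `(1,1)` or down `(1,-1)`. -/
inductive DStep : Type
  | up : DStep
  | down : DStep
  deriving DecidableEq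

instance : Fintype DStep where
  elems := {DStep.up, DStep.down}
  complete := by intro x; cases x <;> simp

/-- The vertical displacement of a Dyck step. -/
def DStep.val : DStep → ℤ
  | .up => 1
  | .down => -1

/-- The height of the path after its first `k` steps. -/
def dHeight (l : List DStep) (k : ℕ) : ℤ := ((l.take k).map DStep.val).sum

/-- A list of steps is a Dyck path if it never goes below the x-axis and ends at height 0. -/
def IsDyck (l : List DStep) : Prop :=
  (∀ k : ℕ, 0 ≤ dHeight l k) ∧ dHeight l l.length = 0

/-- The weight of a Dyck path w.r.t. `c`: a factor `c i` for every down step of height `i`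
(the height of a step being the `y`-coordinate of its ending point). -/
def dWeight (c : ℕ → ℚ) (l : List DStep) : ℚ :=
  ∏ i ∈ Finset.range l.length,
    match l.getD i DStep.up with
    | .up => 1
    | .down => c (dHeight l (i + 1)).toNat

open Classical in
/-- `Dyck_n(c)`: the sum of the weights of all Dyck paths of length `2n`. -/
noncomputable def dyckSum (n : ℕ) (c : ℕ → ℚ) : ℚ :=
  ∑ f : Fin (2 * n) → DStep,
    if IsDyck (List.ofFn f) then dWeight c (List.ofFn f) else 0



section Aux

lemma dHeight_succ (l : List DStep) (k : ℕ) (hk : k < l.length) :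
    dHeight l (k + 1) = dHeight l k + (l.getD k .up).val := by
  unfold dHeight
  rw [List.map_take, List.map_take, List.sum_take_succ _ k (by simpa using hk)]
  simp [List.getD, List.getElem?_eq_getElem hk]

lemma mHeight_succ (l : List MStep) (k : ℕ) (hk : k < l.length) :
    mHeight l (k + 1) = mHeight l k + (l.getD k .up).val := by
  unfold mHeight
  rw [List.map_take, List.map_take, List.sum_take_succ _ k (by simpa using hk)]
  simp [List.getD, List.getElem?_eq_getElem hk]

lemma dHeight_of_le (l : List DStep) (k : ℕ) (hk : l.length ≤ k) :
    dHeight l k = dHeight l l.length := by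
  unfold dHeight
  rw [List.take_of_length_le hk, List.take_of_length_le le_rfl]

lemma mHeight_of_le (l : List MStep) (k : ℕ) (hk : l.length ≤ k) :
    mHeight l k = mHeight l l.length := by
  unfold mHeight
  rw [List.take_of_length_le hk, List.take_of_length_le le_rfl]

lemma getD_ofFn {X : Type*} {n : ℕ} (f : Fin n → X) (i : ℕ) (hi : i < n) (d : X) :
    (List.ofFn f).getD i d = f ⟨i, hi⟩ := by
  simp [List.getD, List.getElem?_eq_getElem, hi]

lemma prod_range_two_mul (n : ℕ) (F : ℕ → ℚ) :
    ∏ i ∈ Finset.range (2 * n), F i = ∏ k ∈ Finset.range n, (F (2 * k) * F (2 * k + 1)) := by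
  induction n with
  | zero => simp
  | succ m ih =>
      rw [show 2 * (m + 1) = 2 * m + 1 + 1 by ring, Finset.prod_range_succ,
        Finset.prod_range_succ, ih, Finset.prod_range_succ]
      ring

end Aux

section Pairing

/-- Contract a pair of Dyck steps to a Motzkin step. -/
def contract : DStep × DStep → MStep
  | (.up, .up) => .up
  | (.down, .down) => .down
  | _ => .flat

/-- The local weight of a pair of Dyck steps, given the Motzkin height `h`
after the corresponding Motzkin step. -/
def pairW (c : ℕ → ℚ) : DStep × DStep → ℕ → ℚ
  | (.up, .up), _ => 1
  | (.up, .down), h => c (2 * h)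
  | (.down, .up), h => if h = 0 then 0 else c (2 * h - 1)
  | (.down, .down), h => c (2 * h) * c (2 * h + 1)

/-- Expand a sequence of pairs to a Dyck-step sequence. -/
def expand {n : ℕ} (p : Fin n → DStep × DStep) : Fin (2 * n) → DStep :=
  fun i => if i.val % 2 = 0 then (p ⟨i.val / 2, by omega⟩).1 else (p ⟨i.val / 2, by omega⟩).2

lemma expand_even {n : ℕ} (p : Fin n → DStep × DStep) (k : ℕ) (hk : k < n) :
    expand p ⟨2 * k, by omega⟩ = (p ⟨k, hk⟩).1 := by
  have h : (2 * k) / 2 = k := by omega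
  simp [expand, h]

lemma expand_odd {n : ℕ} (p : Fin n → DStep × DStep) (k : ℕ) (hk : k < n) :
    expand p ⟨2 * k + 1, by omega⟩ = (p ⟨k, hk⟩).2 := by
  have h : (2 * k + 1) / 2 = k := by omega
  have h2 : ¬ ((2 * k + 1) % 2 = 0) := by omega
  simp [expand, h, h2]

/-- Pairing up of Dyck steps as an equivalence. -/
def pairEquiv (n : ℕ) : (Fin n → DStep × DStep) ≃ (Fin (2 * n) → DStep) where
  toFun := expand
  invFun f := fun k => (f ⟨2 * k.val, by omega⟩, f ⟨2 * k.val + 1, by omega⟩)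
  left_inv p := by
    funext k
    have h1 := expand_even p k.val k.isLt
    have h2 := expand_odd p k.val k.isLt
    exact Prod.ext (by simpa using h1) (by simpa using h2)
  right_inv f := by
    funext i
    rcases Nat.even_or_odd i.val with ⟨m, hm⟩ | ⟨m, hm⟩
    · have hk : m < n := by omega
      have := expand_even (fun k : Fin n => (f ⟨2 * k.val, by omega⟩, f ⟨2 * k.val + 1, by omega⟩)) m hk
      simp only at this
      have hi : i = ⟨2 * m, by omega⟩ := Fin.ext (by simp; omega)
      rw [hi]
      exact this
    · have hk : m < n := by omega
      have := expand_odd (fun k : Fin n => (f ⟨2 * k.val, by omega⟩, f ⟨2 * k.val + 1, by omega⟩)) m hk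
      simp only at this
      have hi : i = ⟨2 * m + 1, by omega⟩ := Fin.ext (by simp; omega)
      rw [hi]
      exact this

end Pairing

lemma contract_val (q : DStep × DStep) : 2 * (contract q).val = q.1.val + q.2.val := by
  rcases q with ⟨a, b⟩
  cases a <;> cases b <;> rfl

section Heights

variable {n : ℕ} (p : Fin n → DStep × DStep)

lemma heightM_succ (k : ℕ) (hk : k < n) :
    mHeight (List.ofFn (contract ∘ p)) (k + 1)
      = mHeight (List.ofFn (contract ∘ p)) k + (contract (p ⟨k, hk⟩)).val := by
  rw [mHeight_succ _ k (by simp [List.length_ofFn]; omega),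
    getD_ofFn _ k (by omega)]
  rfl

lemma heightE (k : ℕ) (hk : k ≤ n) :
    dHeight (List.ofFn (expand p)) (2 * k) = 2 * mHeight (List.ofFn (contract ∘ p)) k := by
  induction k with
  | zero => simp [dHeight, mHeight]
  | succ m ih =>
      have hm : m < n := by omega
      have e1 : dHeight (List.ofFn (expand p)) (2 * m + 1)
          = dHeight (List.ofFn (expand p)) (2 * m) + (p ⟨m, hm⟩).1.val := by
        rw [dHeight_succ _ (2 * m) (by simp [List.length_ofFn]; omega),
          getD_ofFn _ (2 * m) (by omega), expand_even p m hm]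
      have e2 : dHeight (List.ofFn (expand p)) (2 * m + 1 + 1)
          = dHeight (List.ofFn (expand p)) (2 * m + 1) + (p ⟨m, hm⟩).2.val := by
        rw [dHeight_succ _ (2 * m + 1) (by simp [List.length_ofFn]; omega),
          getD_ofFn _ (2 * m + 1) (by omega), expand_odd p m hm]
      have e3 := heightM_succ p m hm
      have e4 := contract_val (p ⟨m, hm⟩)
      have : 2 * (m + 1) = 2 * m + 1 + 1 := by ring
      rw [this, e2, e1, ih (by omega), e3]
      omega

lemma heightO (k : ℕ) (hk : k < n) :
    dHeight (List.ofFn (expand p)) (2 * k + 1)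
      = 2 * mHeight (List.ofFn (contract ∘ p)) k + (p ⟨k, hk⟩).1.val := by
  rw [dHeight_succ _ (2 * k) (by simp [List.length_ofFn]; omega),
    getD_ofFn _ (2 * k) (by omega), expand_even p k hk, heightE p k (by omega)]

end Heights

open Classical in
lemma pointwise (c : ℕ → ℚ) {n : ℕ} (p : Fin n → DStep × DStep) :
    (if IsDyck (List.ofFn (expand p)) then dWeight c (List.ofFn (expand p)) else 0)
      = if IsMotzkin (List.ofFn (contract ∘ p)) then
          ∏ k : Fin n, pairW c (p k) (mHeight (List.ofFn (contract ∘ p)) (k.val + 1)).toNat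
        else 0 := by
  set lf := List.ofFn (expand p) with hlf
  set lg := List.ofFn (contract ∘ p) with hlg
  classical
  have hlfl : lf.length = 2 * n := by simp [hlf]
  have hlgl : lg.length = n := by simp [hlg]
  have hE : ∀ k, k ≤ n → dHeight lf (2 * k) = 2 * mHeight lg k := fun k hk => heightE p k hk
  have hO : ∀ (k : ℕ) (hk : k < n), dHeight lf (2 * k + 1)
      = 2 * mHeight lg k + (p ⟨k, hk⟩).1.val := fun k hk => heightO p k hk
  have hM : ∀ (k : ℕ) (hk : k < n), mHeight lg (k + 1)
      = mHeight lg k + (contract (p ⟨k, hk⟩)).val := fun k hk => heightM_succ p k hk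
  by_cases hd : IsDyck lf
  · have hmn : ∀ k, 0 ≤ mHeight lg k := by
      intro k
      by_cases hk : k ≤ n
      · have h1 := hd.1 (2 * k)
        rw [hE k hk] at h1
        omega
      · rw [mHeight_of_le lg k (by omega), hlgl]
        have h1 := hd.2
        rw [hlfl, hE n le_rfl] at h1
        omega
    have hm : IsMotzkin lg := by
      refine ⟨hmn, ?_⟩
      have h1 := hd.2
      rw [hlfl, hE n le_rfl] at h1
      rw [hlgl]
      omega
    rw [if_pos hd, if_pos hm]
    unfold dWeight
    rw [hlfl, prod_range_two_mul, ← Fin.prod_univ_eq_prod_range]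
    apply Finset.prod_congr rfl
    intro k _
    have hk : k.val < n := k.isLt
    have g1 : lf.getD (2 * k.val) .up = (p k).1 := by
      rw [hlf, getD_ofFn _ _ (by omega), expand_even p k.val hk]
    have g2 : lf.getD (2 * k.val + 1) .up = (p k).2 := by
      rw [hlf, getD_ofFn _ _ (by omega), expand_odd p k.val hk]
    have h1 : dHeight lf (2 * k.val + 1) = 2 * mHeight lg k.val + (p k).1.val :=
      hO k.val hk
    have h2 : dHeight lf (2 * k.val + 1 + 1) = 2 * mHeight lg (k.val + 1) := by
      rw [show 2 * k.val + 1 + 1 = 2 * (k.val + 1) by ring, hE (k.val + 1) (by omega)]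
    have h3 : mHeight lg (k.val + 1) = mHeight lg k.val + (contract (p k)).val :=
      hM k.val hk
    have h4 : 0 ≤ mHeight lg k.val := hmn k.val
    have h5 : 0 ≤ dHeight lf (2 * k.val + 1) := hd.1 _
    rw [h1] at h5
    rcases hq : p k with ⟨a, b⟩
    rw [hq] at g1 g2 h1 h3 h5
    cases a <;> cases b <;>
      simp only [DStep.val, contract, MStep.val] at h3 h5 h1 <;>
      simp only [g1, g2, h1, h2, h3, contract, pairW, DStep.val, MStep.val]
    · -- up up
      simp
    · -- up down
      rw [one_mul]
      congr 1
      omega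
    · -- down up
      rw [mul_one]
      rw [if_neg (by omega)]
      congr 1
      omega
    · -- down down
      rw [mul_comm]
      congr 2 <;> omega
  · rw [if_neg hd]
    by_cases hm : IsMotzkin lg
    swap
    · rw [if_neg hm]
    rw [if_pos hm]
    have hend : dHeight lf (2 * n) = 0 := by
      have := hm.2
      rw [hlgl] at this
      rw [hE n le_rfl, this, mul_zero]
    have hex : ∃ j, dHeight lf j < 0 := by
      by_contra h
      push_neg at h
      exact hd ⟨h, by rw [hlfl]; exact hend⟩
    obtain ⟨j, hj⟩ := hex
    have hjlt : j < 2 * n := by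
      by_contra h
      rw [dHeight_of_le lf j (by omega), hlfl, hend] at hj
      omega
    obtain ⟨k, hk, hjodd⟩ : ∃ k, k < n ∧ j = 2 * k + 1 := by
      rcases Nat.even_or_odd j with ⟨m, hmj⟩ | ⟨m, hmj⟩
      · exfalso
        have := hm.1 m
        rw [show j = 2 * m by omega, hE m (by omega)] at hj
        omega
      · exact ⟨m, by omega, by omega⟩
    rw [hjodd, hO k hk] at hj
    have h4 := hm.1 k
    have h5 := hm.1 (k + 1)
    have h3 := hM k hk
    have hk0 : mHeight lg k = 0 := by
      rcases ha : (p ⟨k, hk⟩).1 with _ | _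
      · rw [ha] at hj; simp [DStep.val] at hj; omega
      · rw [ha] at hj; simp [DStep.val] at hj; omega
    have ha : (p ⟨k, hk⟩).1 = .down := by
      rcases ha : (p ⟨k, hk⟩).1 with _ | _
      · rw [ha] at hj; simp [DStep.val] at hj; omega
      · rfl
    have hb : (p ⟨k, hk⟩).2 = .up := by
      rcases hb : (p ⟨k, hk⟩).2 with _ | _
      · rfl
      · exfalso
        have hpk' : p ⟨k, hk⟩ = (.down, .down) := Prod.ext ha hb
        have : contract (p ⟨k, hk⟩) = .down := by rw [hpk']; rfl
        rw [this] at h3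
        simp [MStep.val] at h3
        omega
    have hpk : p ⟨k, hk⟩ = (.down, .up) := Prod.ext ha hb
    have hflat : contract (p ⟨k, hk⟩) = .flat := by rw [hpk]; rfl
    symm
    apply Finset.prod_eq_zero (Finset.mem_univ (⟨k, hk⟩ : Fin n))
    have : mHeight lg (k + 1) = 0 := by
      rw [h3, hflat, hk0]; rfl
    simp only [hpk, this, pairW]
    norm_num

lemma univ_pairs :
    (Finset.univ : Finset (DStep × DStep))
      = {(.up, .up), (.up, .down), (.down, .up), (.down, .down)} := by
  decide

lemma sum_pairW (c : ℕ → ℚ) (m : MStep) (h : ℕ) :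
    (∑ q : DStep × DStep, if contract q = m then pairW c q h else 0)
      = match m with
        | .up => 1
        | .flat => (if h = 0 then 0 else c (2 * h - 1)) + c (2 * h)
        | .down => c (2 * h) * c (2 * h + 1) := by
  rw [univ_pairs]
  cases m <;> simp [contract, pairW, Finset.sum_insert, add_comm]

/-- If `α n = c (2n-1) + c (2n)` and `β n = c (2n) * c (2n+1)` (with `c_{-1} = 0`),
then `Dyck_n(c) = Mot_n(α, β)` for all `n ≥ 0`. -/
theorem dyck_eq_motzkin_contraction (c α β : ℕ → ℚ)
    (hα : ∀ m : ℕ, α m = (if m = 0 then 0 else c (2 * m - 1)) + c (2 * m))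
    (hβ : ∀ m : ℕ, β m = c (2 * m) * c (2 * m + 1))
    (n : ℕ) :
    dyckSum n c = motSum n α β := by
  classical
  unfold dyckSum motSum
  rw [← Equiv.sum_comp (pairEquiv n)
    (fun f => if IsDyck (List.ofFn f) then dWeight c (List.ofFn f) else 0)]
  simp only [pairEquiv, Equiv.coe_fn_mk]
  refine Eq.trans (Finset.sum_congr rfl (fun p _ => pointwise c p)) ?_
  rw [← Finset.sum_fiberwise Finset.univ (fun p : Fin n → DStep × DStep => contract ∘ p)
      (fun p => if IsMotzkin (List.ofFn (contract ∘ p)) then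
          ∏ k : Fin n, pairW c (p k) (mHeight (List.ofFn (contract ∘ p)) (k.val + 1)).toNat
        else 0)]
  apply Finset.sum_congr rfl
  intro g _
  rw [Finset.sum_filter]
  by_cases hm : IsMotzkin (List.ofFn g)
  · rw [if_pos hm]
    have key : ∀ p : Fin n → DStep × DStep,
        (if contract ∘ p = g then
          (if IsMotzkin (List.ofFn (contract ∘ p)) then
            ∏ k : Fin n, pairW c (p k) (mHeight (List.ofFn (contract ∘ p)) (k.val + 1)).toNat
          else 0) else 0)
        = ∏ k : Fin n,
            (if contract (p k) = g k then
              pairW c (p k) (mHeight (List.ofFn g) (k.val + 1)).toNat else 0) := by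
      intro p
      by_cases hpg : contract ∘ p = g
      · rw [if_pos hpg, hpg, if_pos hm]
        exact Finset.prod_congr rfl fun k _ => (if_pos (congrFun hpg k)).symm
      · rw [if_neg hpg]
        obtain ⟨k, hk⟩ : ∃ k, contract (p k) ≠ g k := by
          by_contra h
          push_neg at h
          exact hpg (funext h)
        refine (Finset.prod_eq_zero (Finset.mem_univ k) ?_).symm
        exact if_neg hk
    rw [Finset.sum_congr rfl fun p _ => key p,
      ← Fintype.prod_sum (fun (k : Fin n) (q : DStep × DStep) =>
        if contract q = g k then pairW c q (mHeight (List.ofFn g) (k.val + 1)).toNat else 0)]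
    unfold mWeight
    rw [List.length_ofFn, ← Fin.prod_univ_eq_prod_range]
    apply Finset.prod_congr rfl
    intro k _
    rw [sum_pairW, getD_ofFn g k.val k.isLt]
    cases hgk : g k
    · simp [hgk]
    · simp [hgk, hβ]
    · simp [hgk, hα]
  · rw [if_neg hm]
    apply Finset.sum_eq_zero
    intro p _
    by_cases hpg : contract ∘ p = g
    · rw [if_pos hpg, hpg, if_neg hm]
    · rw [if_neg hpg]
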